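/- Let w₁, w₂ ∈ ℝᵈ be an optimal solution of the problem: minimize ‖w₁‖² + ‖w₂‖² subject to yⱼ·((w₁ + r·w₂) · vⱼ) ≥ 1 for all j in a finite index set, where r > 0, vⱼ ∈ ℝᵈ, yⱼ ∈ {-1,1}, and the constraints are feasible. Then w₂ = r·w₁. -/

import Mathlib

open Matrix BigOperators Finset

/-- Weight alignment: an optimal solution of the GNN max-margin problem over
r-regular graphs satisfies `w₂ = r • w₁`. -/
theorem weight_alignment {d m : ℕ} (r : ℝ) (hr : 0 < r)
    (v : Fin m → Fin d → ℝ) (y : Fin m → ℝ)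
    (hy : ∀ j, y j = 1 ∨ y j = -1)
    (w₁ w₂ : Fin d → ℝ)
    (hfeas : ∀ j, y j * ((w₁ + r • w₂) ⬝ᵥ v j) ≥ 1)
    (hopt : ∀ u₁ u₂ : Fin d → ℝ,
      (∀ j, y j * ((u₁ + r • u₂) ⬝ᵥ v j) ≥ 1) →
      w₁ ⬝ᵥ w₁ + w₂ ⬝ᵥ w₂ ≤ u₁ ⬝ᵥ u₁ + u₂ ⬝ᵥ u₂) :
    w₂ = r • w₁ := by
  have hc : (0:ℝ) < 1 + r ^ 2 := by positivity
  set s : Fin d → ℝ := w₁ + r • w₂ with hs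
  set u₁ : Fin d → ℝ := (1 / (1 + r ^ 2)) • s with hu₁
  set u₂ : Fin d → ℝ := (r / (1 + r ^ 2)) • s with hu₂
  have hsum : u₁ + r • u₂ = s := by
    rw [hu₁, hu₂, smul_smul, ← add_smul]
    have : 1 / (1 + r ^ 2) + r * (r / (1 + r ^ 2)) = 1 := by
      field_simp
    rw [this, one_smul]
  have hfeas' : ∀ j, y j * ((u₁ + r • u₂) ⬝ᵥ v j) ≥ 1 := by
    intro j; rw [hsum]; exact hfeas j
  have hle := hopt u₁ u₂ hfeas'
  have huu : u₁ ⬝ᵥ u₁ + u₂ ⬝ᵥ u₂ = (s ⬝ᵥ s) / (1 + r ^ 2) := by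
    rw [hu₁, hu₂]
    simp only [smul_dotProduct, dotProduct_smul, smul_eq_mul]
    field_simp
  have hss : s ⬝ᵥ s = w₁ ⬝ᵥ w₁ + 2 * r * (w₁ ⬝ᵥ w₂) + r ^ 2 * (w₂ ⬝ᵥ w₂) := by
    rw [hs]
    simp only [add_dotProduct, dotProduct_add, smul_dotProduct, dotProduct_smul,
      smul_eq_mul, dotProduct_comm w₂ w₁]
    ring
  have key : (w₂ - r • w₁) ⬝ᵥ (w₂ - r • w₁) ≤ 0 := by
    have h1 : w₁ ⬝ᵥ w₁ + w₂ ⬝ᵥ w₂ ≤ (s ⬝ᵥ s) / (1 + r ^ 2) := by rwa [huu] at hle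
    have h2 : (1 + r ^ 2) * (w₁ ⬝ᵥ w₁ + w₂ ⬝ᵥ w₂) ≤ s ⬝ᵥ s := by
      rw [← le_div_iff₀' hc]; exact h1
    rw [hss] at h2
    have : (w₂ - r • w₁) ⬝ᵥ (w₂ - r • w₁)
        = (1 + r ^ 2) * (w₁ ⬝ᵥ w₁ + w₂ ⬝ᵥ w₂)
          - (w₁ ⬝ᵥ w₁ + 2 * r * (w₁ ⬝ᵥ w₂) + r ^ 2 * (w₂ ⬝ᵥ w₂)) := by
      simp only [sub_dotProduct, dotProduct_sub, smul_dotProduct, dotProduct_smul,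
        smul_eq_mul, dotProduct_comm w₁ w₂]
      ring
    linarith [this]
  have hz : (w₂ - r • w₁) ⬝ᵥ (w₂ - r • w₁) = 0 :=
    le_antisymm key (Finset.sum_nonneg fun i _ => mul_self_nonneg _)
  have := (dotProduct_self_eq_zero).mp hz
  exact sub_eq_zero.mp this
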